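/- If G is a graph that is a disjoint union of a 3-leaf power component C and a remainder G', then G admits a 3-leaf power edition of size at most k if and only if G' does. -/

import Mathlib

open SimpleGraph

/-- The graph `G + F` obtained from `G` by toggling (adding or deleting) the pairs in `F`:
its edge set is the symmetric difference of `E(G)` and `F`. -/
def editGraph {V : Type*} (G : SimpleGraph V) (F : Set (Sym2 V)) : SimpleGraph V where
  Adj u v := u ≠ v ∧ ((G.Adj u v ∧ s(u, v) ∉ F) ∨ (¬ G.Adj u v ∧ s(u, v) ∈ F))
  symm := by
    constructor
    intro u v h
    refine ⟨h.1.symm, ?_⟩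
    rw [Sym2.eq_swap]
    rcases h.2 with ⟨h1, h2⟩ | ⟨h1, h2⟩
    · exact Or.inl ⟨h1.symm, h2⟩
    · exact Or.inr ⟨fun hh => h1 hh.symm, h2⟩
  loopless := ⟨fun u h => h.1 rfl⟩

/-- The bull: a triangle `0,1,2` with pendant vertices `3` (on `1`) and `4` (on `2`). -/
def bull : SimpleGraph (Fin 5) :=
  SimpleGraph.fromRel (fun a b => (a, b) ∈ ([(0,1),(0,2),(1,2),(1,3),(2,4)] : List (Fin 5 × Fin 5)))

/-- The dart: a diamond `0,1,2,3` (missing edge `(0,1)`) plus a pendant vertex `4`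
adjacent to the degree-3 vertex `2`. -/
def dart : SimpleGraph (Fin 5) :=
  SimpleGraph.fromRel (fun a b => (a, b) ∈ ([(0,2),(0,3),(1,2),(1,3),(2,3),(2,4)] : List (Fin 5 × Fin 5)))

/-- The gem: a path `0-1-2-3` plus a dominating vertex `4`. -/
def gem : SimpleGraph (Fin 5) :=
  SimpleGraph.fromRel (fun a b => (a, b) ∈ ([(0,1),(1,2),(2,3),(0,4),(1,4),(2,4),(3,4)] : List (Fin 5 × Fin 5)))

/-- A graph is a 3-leaf power iff it is {bull, dart, gem, chordless `C≥4`}-free. -/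
def Is3LeafPower {V : Type*} (H : SimpleGraph V) : Prop :=
  IsEmpty (bull ↪g H) ∧ IsEmpty (dart ↪g H) ∧ IsEmpty (gem ↪g H) ∧
    ∀ n, 4 ≤ n → IsEmpty (SimpleGraph.cycleGraph n ↪g H)

/-- `G` admits a 3-leaf power edition of size at most `k`. -/
def Has3LPEdition {V : Type*} (G : SimpleGraph V) (k : ℕ) : Prop :=
  ∃ F : Finset (Sym2 V), F.card ≤ k ∧ Is3LeafPower (editGraph G ↑F)

/- ### Auxiliary lemmas -/

instance : DecidableRel bull.Adj := fun a b =>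
  decidable_of_iff (a ≠ b ∧ ((a, b) ∈ ([(0,1),(0,2),(1,2),(1,3),(2,4)] : List (Fin 5 × Fin 5))
    ∨ (b, a) ∈ ([(0,1),(0,2),(1,2),(1,3),(2,4)] : List (Fin 5 × Fin 5)))) Iff.rfl

instance : DecidableRel dart.Adj := fun a b =>
  decidable_of_iff (a ≠ b ∧ ((a, b) ∈ ([(0,2),(0,3),(1,2),(1,3),(2,3),(2,4)] : List (Fin 5 × Fin 5))
    ∨ (b, a) ∈ ([(0,2),(0,3),(1,2),(1,3),(2,3),(2,4)] : List (Fin 5 × Fin 5)))) Iff.rfl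

instance : DecidableRel gem.Adj := fun a b =>
  decidable_of_iff (a ≠ b ∧ ((a, b) ∈ ([(0,1),(1,2),(2,3),(0,4),(1,4),(2,4),(3,4)] : List (Fin 5 × Fin 5))
    ∨ (b, a) ∈ ([(0,1),(1,2),(2,3),(0,4),(1,4),(2,4),(3,4)] : List (Fin 5 × Fin 5)))) Iff.rfl

lemma bull_preconnected : bull.Preconnected := by decide
lemma dart_preconnected : dart.Preconnected := by decide
lemma gem_preconnected : gem.Preconnected := by decide

/-- 3-leaf-power-ness transfers backwards along embeddings. -/
lemma is3LP_of_embedding {V W : Type*} {G : SimpleGraph V} {H : SimpleGraph W}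
    (f : G ↪g H) (h : Is3LeafPower H) : Is3LeafPower G := by
  obtain ⟨h1, h2, h3, h4⟩ := h
  refine ⟨⟨fun e => h1.false (f.comp e)⟩, ⟨fun e => h2.false (f.comp e)⟩,
    ⟨fun e => h3.false (f.comp e)⟩, fun n hn => ⟨fun e => (h4 n hn).false (f.comp e)⟩⟩

/-- Along a walk in `G`, the images under an embedding stay on the same side of a
separation of `H`. -/
lemma side_of_reachable {V W : Type*} {H : SimpleGraph V} {G : SimpleGraph W} {S : Set V}
    (hsep : ∀ x y, H.Adj x y → (x ∈ S ↔ y ∈ S)) (f : G ↪g H)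
    {a b : W} (h : G.Reachable a b) : f a ∈ S ↔ f b ∈ S := by
  obtain ⟨w⟩ := h
  induction w with
  | nil => rfl
  | cons hadj p ih => exact (hsep _ _ (f.map_rel_iff.mpr hadj)).trans ih

/-- A connected graph embedding into a separated graph embeds into one of the sides. -/
lemma embed_side {V W : Type*} [Nonempty W] {H : SimpleGraph V} {G : SimpleGraph W}
    (hG : G.Preconnected) {S : Set V}
    (hsep : ∀ x y, H.Adj x y → (x ∈ S ↔ y ∈ S))
    (f : G ↪g H) : Nonempty (G ↪g H.induce S) ∨ Nonempty (G ↪g H.induce Sᶜ) := by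
  obtain w0 := Classical.arbitrary W
  by_cases hw : f w0 ∈ S
  · left
    have hall : ∀ a, f a ∈ S := fun a => (side_of_reachable hsep f (hG w0 a)).mp hw
    exact ⟨⟨⟨fun a => ⟨f a, hall a⟩, fun a b hab =>
      f.injective (congrArg Subtype.val hab)⟩, f.map_rel_iff⟩⟩
  · right
    have hall : ∀ a, f a ∈ Sᶜ := fun a => fun hmem =>
      hw ((side_of_reachable hsep f (hG w0 a)).mpr hmem)
    exact ⟨⟨⟨fun a => ⟨f a, hall a⟩, fun a b hab =>
      f.injective (congrArg Subtype.val hab)⟩, f.map_rel_iff⟩⟩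

/-- If a graph separates into two 3-leaf-power sides, it is a 3-leaf power. -/
lemma is3LP_union {V : Type*} {H : SimpleGraph V} {S : Set V}
    (hsep : ∀ x y, H.Adj x y → (x ∈ S ↔ y ∈ S))
    (h1 : Is3LeafPower (H.induce S)) (h2 : Is3LeafPower (H.induce Sᶜ)) :
    Is3LeafPower H := by
  refine ⟨⟨fun f => ?_⟩, ⟨fun f => ?_⟩, ⟨fun f => ?_⟩, fun n hn => ⟨fun f => ?_⟩⟩
  · rcases embed_side bull_preconnected hsep f with e | e
    · exact e.elim h1.1.false
    · exact e.elim h2.1.false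
  · rcases embed_side dart_preconnected hsep f with e | e
    · exact e.elim h1.2.1.false
    · exact e.elim h2.2.1.false
  · rcases embed_side gem_preconnected hsep f with e | e
    · exact e.elim h1.2.2.1.false
    · exact e.elim h2.2.2.1.false
  · have : NeZero n := ⟨by omega⟩
    rcases embed_side cycleGraph_preconnected hsep f with e | e
    · exact e.elim (h1.2.2.2 n hn).false
    · exact e.elim (h2.2.2.2 n hn).false

theorem edition_iff_of_threeLeafPower_component {V : Type*} (G : SimpleGraph V) (k : ℕ)
    (C : Set V) (hconn : (G.induce C).Connected)
    (hsep : ∀ x ∈ C, ∀ y ∉ C, ¬ G.Adj x y)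
    (h3 : Is3LeafPower (G.induce C)) :
    Has3LPEdition G k ↔ Has3LPEdition (G.induce Cᶜ) k := by
  classical
  set ι : (↥Cᶜ) → V := Subtype.val with hι
  have hιinj : Function.Injective ι := Subtype.val_injective
  have hsyminj : Function.Injective (Sym2.map ι) := Sym2.map.injective hιinj
  constructor
  · rintro ⟨F, hcard, h3F⟩
    refine ⟨F.preimage (Sym2.map ι) (hsyminj.injOn), ?_, ?_⟩
    · calc (F.preimage (Sym2.map ι) (hsyminj.injOn)).card
          ≤ F.card := Finset.card_le_card_of_injOn (Sym2.map ι)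
            (fun e he => (Finset.mem_preimage).mp he) (hsyminj.injOn)
        _ ≤ k := hcard
    · refine is3LP_of_embedding ?_ h3F
      refine ⟨⟨ι, hιinj⟩, ?_⟩
      intro u v
      show (editGraph G ↑F).Adj u.val v.val ↔
        (editGraph (G.induce Cᶜ) ↑(F.preimage (Sym2.map ι) (hsyminj.injOn))).Adj u v
      have hmem : (s(u, v) ∈ (↑(F.preimage (Sym2.map ι) (hsyminj.injOn)) : Set (Sym2 ↥Cᶜ)))
          ↔ s(u.val, v.val) ∈ (↑F : Set (Sym2 V)) := by
        simp [Finset.mem_preimage, Sym2.map_pair_eq, hι]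
      constructor
      · rintro ⟨hne, h⟩
        refine ⟨fun hh => hne (congrArg Subtype.val hh), ?_⟩
        rcases h with ⟨ha, hf⟩ | ⟨ha, hf⟩
        · exact Or.inl ⟨ha, fun hh => hf (hmem.mp hh)⟩
        · exact Or.inr ⟨ha, hmem.mpr hf⟩
      · rintro ⟨hne, h⟩
        refine ⟨fun hh => hne (Subtype.ext hh), ?_⟩
        rcases h with ⟨ha, hf⟩ | ⟨ha, hf⟩
        · exact Or.inl ⟨ha, fun hh => hf (hmem.mpr hh)⟩
        · exact Or.inr ⟨ha, hmem.mp hf⟩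
  · rintro ⟨F', hcard, h3F'⟩
    set F : Finset (Sym2 V) := F'.map ⟨Sym2.map ι, hsyminj⟩ with hF
    have hmemF : ∀ e : Sym2 V, e ∈ F → ∀ x ∈ e, x ∈ Cᶜ := by
      intro e he x hx
      rw [hF, Finset.mem_map] at he
      obtain ⟨e', -, rfl⟩ := he
      obtain ⟨y, -, rfl⟩ := Sym2.mem_map.mp hx
      exact y.2
    refine ⟨F, by rw [hF, Finset.card_map]; exact hcard, ?_⟩
    have hsep' : ∀ x y, (editGraph G ↑F).Adj x y → (x ∈ C ↔ y ∈ C) := by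
      intro x y hadj
      rcases hadj.2 with ⟨ha, -⟩ | ⟨-, hf⟩
      · constructor
        · intro hx; by_contra hy; exact hsep x hx y hy ha
        · intro hy; by_contra hx; exact hsep y hy x hx ha.symm
      · have hx : x ∈ Cᶜ := hmemF _ hf x (Sym2.mem_mk_left x y)
        have hy : y ∈ Cᶜ := hmemF _ hf y (Sym2.mem_mk_right x y)
        exact iff_of_false hx hy
    refine is3LP_union hsep' ?_ ?_
    · -- induce C (editGraph G F) embeds into induce C G
      refine is3LP_of_embedding ?_ h3
      refine ⟨⟨id, fun a b h => h⟩, ?_⟩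
      intro u v
      have hnotin : s((u : V), (v : V)) ∉ (↑F : Set (Sym2 V)) := fun hh =>
        (hmemF _ hh u (Sym2.mem_mk_left _ _)) u.2
      show (G.induce C).Adj u v ↔ ((editGraph G ↑F).induce C).Adj u v
      constructor
      · intro h
        exact ⟨fun hh => (G.induce C).ne_of_adj h (Subtype.ext hh), Or.inl ⟨h, hnotin⟩⟩
      · rintro ⟨hne, h⟩
        rcases h with ⟨ha, -⟩ | ⟨-, hf⟩
        · exact ha
        · exact absurd hf hnotin
    · -- induce Cᶜ (editGraph G F) embeds into editGraph (G.induce Cᶜ) F'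
      refine is3LP_of_embedding ?_ h3F'
      refine ⟨⟨id, fun a b h => h⟩, ?_⟩
      intro u v
      have hmem : s((u : V), (v : V)) ∈ (↑F : Set (Sym2 V)) ↔
          s(u, v) ∈ (↑F' : Set (Sym2 ↥Cᶜ)) := by
        rw [hF]
        simp only [Finset.coe_map, Set.mem_image, Finset.mem_coe, Function.Embedding.coeFn_mk]
        constructor
        · rintro ⟨e', he', heq⟩
          have : e' = s(u, v) := hsyminj (by rw [heq, Sym2.map_pair_eq])
          rwa [this] at he'
        · intro h
          exact ⟨s(u, v), h, by rw [Sym2.map_pair_eq]⟩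
      show (editGraph (G.induce Cᶜ) ↑F').Adj u v ↔ ((editGraph G ↑F).induce Cᶜ).Adj u v
      constructor
      · rintro ⟨hne, h⟩
        refine ⟨fun hh => hne (Subtype.ext hh), ?_⟩
        rcases h with ⟨ha, hf⟩ | ⟨ha, hf⟩
        · exact Or.inl ⟨ha, fun hh => hf (hmem.mp hh)⟩
        · exact Or.inr ⟨ha, hmem.mpr hf⟩
      · rintro ⟨hne, h⟩
        refine ⟨fun hh => hne (congrArg Subtype.val hh), ?_⟩
        rcases h with ⟨ha, hf⟩ | ⟨ha, hf⟩
        · exact Or.inl ⟨ha, fun hh => hf (hmem.mpr hh)⟩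
        · exact Or.inr ⟨ha, hmem.mp hf⟩
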